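/- Let 0 < ρ < 1 and for n, m ∈ ℕ define E_m(n) = (1−ρ)^{m+1}·ρ^n·∏_{k=1}^{n} (1 + m/k). Then for every x > 0 and y > 0, lim_{A→∞} (1/A)·log E_{⌊Ay⌋}(⌊Ax⌋) = −K(x,y), where K(x,y) = x·log(x/ρ) + y·log y − (x+y)·log(x+y) − y·log(1−ρ). -/

import Mathlib

noncomputable section

open Real Filter Set Topology

/-- Stationary probability of `n` customers in the single-server PS queue with
`m` permanent customers: `E_m(n) = (1−ρ)^{m+1} ρ^n ∏_{k=1}^n (1 + m/k)`. -/
def Estat (ρ : ℝ) (m n : ℕ) : ℝ :=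
  (1 - ρ) ^ (m + 1) * ρ ^ n * ∏ k ∈ Finset.Icc 1 n, (1 + (m : ℝ) / k)

/-- The decay rate `K(x,y) = x log(x/ρ) + y log y − (x+y) log(x+y) − y log(1−ρ)`. -/
def Kdecay (ρ x y : ℝ) : ℝ :=
  x * Real.log (x / ρ) + y * Real.log y - (x + y) * Real.log (x + y)
    - y * Real.log (1 - ρ)


lemma prod_one_add_div (m n : ℕ) : ∏ k ∈ Finset.Icc 1 n, (1 + (m : ℝ) / k)
    = (n + m).factorial / (n.factorial * m.factorial) := by
  induction n with
  | zero => simp [div_self (show ((Nat.factorial m:ℝ)) ≠ 0 by exact_mod_cast m.factorial_ne_zero)]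
  | succ n ih =>
    rw [Finset.prod_Icc_succ_top (by omega), ih]
    have h1 : ((n:ℝ)+1) ≠ 0 := by positivity
    have h2 : (n.factorial : ℝ) ≠ 0 := by exact_mod_cast n.factorial_ne_zero
    have h3 : (m.factorial : ℝ) ≠ 0 := by exact_mod_cast m.factorial_ne_zero
    rw [show n + 1 + m = (n + m) + 1 by omega, Nat.factorial_succ (n + m), Nat.factorial_succ n]
    push_cast
    field_simp
    ring

lemma log_factorial_eq (n : ℕ) (hn : 1 ≤ n) :
    Real.log n.factorial = n * Real.log n - n
      + (Real.log (Stirling.stirlingSeq n) + Real.log (Real.sqrt (2*n))) := by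
  have hn0 : (0:ℝ) < n := by exact_mod_cast hn
  have h1 : (n.factorial : ℝ) ≠ 0 := by exact_mod_cast n.factorial_ne_zero
  have h2 : Real.sqrt (2*(n:ℝ)) ≠ 0 := by positivity
  have h3 : ((n:ℝ)/Real.exp 1) ^ n ≠ 0 := by positivity
  rw [Stirling.stirlingSeq, Real.log_div h1 (mul_ne_zero h2 h3), Real.log_mul h2 h3,
    Real.log_pow, Real.log_div hn0.ne' (Real.exp_pos 1).ne', Real.log_exp]
  ring

lemma tendsto_dlf_div :
    Tendsto (fun n : ℕ => (Real.log n.factorial - ((n:ℝ) * Real.log n - n)) / n)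
      atTop (𝓝 0) := by
  have h1 : Tendsto (fun n : ℕ => Real.log (Stirling.stirlingSeq n) / n) atTop (𝓝 0) := by
    apply Tendsto.div_atTop (l := atTop) (a := Real.log (Real.sqrt π))
    · exact (Real.continuousAt_log (by positivity)).tendsto.comp
        Stirling.tendsto_stirlingSeq_sqrt_pi
    · exact tendsto_natCast_atTop_atTop
  have hlog : Tendsto (fun x : ℝ => Real.log x / x) atTop (𝓝 0) :=
    Real.isLittleO_log_id_atTop.tendsto_div_nhds_zero
  have h2 : Tendsto (fun n : ℕ => Real.log (Real.sqrt (2*(n:ℝ))) / n) atTop (𝓝 0) := by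
    have hc : Tendsto (fun n : ℕ => (2*(n:ℝ))) atTop atTop :=
      (tendsto_natCast_atTop_atTop).const_mul_atTop two_pos
    have := hlog.comp hc
    refine this.congr fun n => ?_
    simp only [Function.comp]
    rw [Real.log_sqrt (by positivity)]
    ring
  have := h1.add h2
  rw [add_zero] at this
  refine this.congr' ?_
  filter_upwards [eventually_ge_atTop 1] with n hn
  rw [log_factorial_eq n hn]
  ring

lemma key_fact (φ : ℝ → ℕ) (c : ℝ) (hc : 0 < c)
    (hφ : Tendsto (fun A => (φ A : ℝ) / A) atTop (𝓝 c)) :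
    Tendsto (fun A => (1/A) * Real.log (φ A).factorial - ((φ A : ℝ)/A) * Real.log A)
      atTop (𝓝 (c * Real.log c - c)) := by
  have hcast : Tendsto (fun A => ((φ A : ℝ))) atTop atTop := by
    have h := hφ.pos_mul_atTop hc tendsto_id
    refine h.congr' ?_
    filter_upwards [eventually_gt_atTop 0] with A hA
    field_simp
    rfl
  have hφtop : Tendsto φ atTop atTop := tendsto_natCast_atTop_iff.mp hcast
  have t1 : Tendsto (fun A => ((φ A : ℝ)/A) * Real.log ((φ A : ℝ)/A)) atTop
      (𝓝 (c * Real.log c)) := by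
    have hcont : ContinuousAt (fun t : ℝ => t * Real.log t) c :=
      continuousAt_id.mul (Real.continuousAt_log hc.ne')
    exact hcont.tendsto.comp hφ
  have t3 : Tendsto (fun A => ((φ A : ℝ)/A) *
      ((Real.log (φ A).factorial - ((φ A : ℝ) * Real.log (φ A) - φ A)) / φ A)) atTop (𝓝 0) := by
    have := hφ.mul (tendsto_dlf_div.comp hφtop)
    rw [mul_zero] at this
    exact this
  have := (t1.sub hφ).add t3
  rw [add_zero] at this
  refine this.congr' ?_
  filter_upwards [eventually_ge_atTop 1, hφtop.eventually_ge_atTop 1] with A hA hφ1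
  have hA0 : (0:ℝ) < A := by linarith
  have hp0 : (0:ℝ) < (φ A : ℝ) := by exact_mod_cast hφ1
  rw [Real.log_div hp0.ne' hA0.ne']
  field_simp
  ring

lemma floor_div_tendsto (c : ℝ) (hc : 0 < c) :
    Tendsto (fun A : ℝ => (⌊A * c⌋₊ : ℝ) / A) atTop (𝓝 c) := by
  have h1 : Tendsto (fun A : ℝ => A * c) atTop atTop :=
    Tendsto.atTop_mul_const hc tendsto_id
  have h2 := (tendsto_nat_floor_div_atTop.comp h1).mul_const c
  rw [one_mul] at h2
  refine h2.congr' ?_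
  filter_upwards [eventually_gt_atTop 0] with A hA
  simp only [Function.comp]
  field_simp

lemma log_Estat (ρ : ℝ) (hρ0 : 0 < ρ) (hρ1 : ρ < 1) (m n : ℕ) :
    Real.log (Estat ρ m n) = ((m:ℝ)+1) * Real.log (1-ρ) + n * Real.log ρ
      + (Real.log ((n+m).factorial) - Real.log (n.factorial) - Real.log (m.factorial)) := by
  have h1 : (0:ℝ) < 1 - ρ := by linarith
  have hnf : (n.factorial : ℝ) ≠ 0 := by exact_mod_cast n.factorial_ne_zero
  have hmf : (m.factorial : ℝ) ≠ 0 := by exact_mod_cast m.factorial_ne_zero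
  have hnmf : ((n+m).factorial : ℝ) ≠ 0 := by exact_mod_cast (n+m).factorial_ne_zero
  rw [Estat, prod_one_add_div,
    Real.log_mul (by positivity) (by positivity),
    Real.log_mul (by positivity) (by positivity),
    Real.log_pow, Real.log_pow,
    Real.log_div hnmf (mul_ne_zero hnf hmf), Real.log_mul hnf hmf]
  push_cast
  ring

/-- Lemma 1: `(1/A) log E_{⌊Ay⌋}(⌊Ax⌋) → −K(x,y)` as `A → ∞`. -/
theorem log_Estat_decay (ρ : ℝ) (hρ0 : 0 < ρ) (hρ1 : ρ < 1) (x y : ℝ)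
    (hx : 0 < x) (hy : 0 < y) :
    Tendsto (fun A : ℝ => (1 / A) * Real.log (Estat ρ ⌊A * y⌋₊ ⌊A * x⌋₊))
      atTop (𝓝 (-Kdecay ρ x y)) := by
  have hn := floor_div_tendsto x hx
  have hm := floor_div_tendsto y hy
  have hnm : Tendsto (fun A : ℝ => ((⌊A*x⌋₊ + ⌊A*y⌋₊ : ℕ) : ℝ)/A) atTop (𝓝 (x+y)) := by
    refine (hn.add hm).congr fun A => ?_
    push_cast
    ring
  have K1 := key_fact (fun A => ⌊A*x⌋₊ + ⌊A*y⌋₊) (x+y) (by positivity) hnm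
  have K2 := key_fact (fun A => ⌊A*x⌋₊) x hx hn
  have K3 := key_fact (fun A => ⌊A*y⌋₊) y hy hm
  have hinv : Tendsto (fun A : ℝ => 1/A) atTop (𝓝 0) := by
    simpa only [one_div] using tendsto_inv_atTop_zero
  have term1 : Tendsto (fun A : ℝ => ((⌊A*y⌋₊:ℝ)/A + 1/A) * Real.log (1-ρ)) atTop
      (𝓝 (y * Real.log (1-ρ))) := by
    have := (hm.add hinv).mul_const (Real.log (1-ρ))
    rw [add_zero] at this
    exact this
  have term2 := hn.mul_const (Real.log ρ)
  have big := term1.add (term2.add ((K1.sub K2).sub K3))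
  have hval : y * Real.log (1-ρ) + (x * Real.log ρ +
      (((x+y) * Real.log (x+y) - (x+y)) - (x * Real.log x - x) - (y * Real.log y - y)))
      = -Kdecay ρ x y := by
    rw [Kdecay, Real.log_div hx.ne' hρ0.ne']
    ring
  rw [hval] at big
  refine big.congr' ?_
  filter_upwards [eventually_ge_atTop 1] with A hA
  have hA0 : (0:ℝ) < A := by linarith
  rw [log_Estat ρ hρ0 hρ1 ⌊A*y⌋₊ ⌊A*x⌋₊]
  push_cast
  field_simp
  ring
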